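/- Let N_1, N_2 be n×n real symmetric matrices with N_1 positive definite and N_2 − N_1 positive semidefinite, and let Q̃_1, Q̃_2, Q̂_1, Q̂_2 be n×n real positive semidefinite matrices. If r_1 and r_2 are real numbers with r_1 ≥ r_2/4 > 0, then Tr[ r_1 (Q̂_1 − Q̃_1)( (N_1 + Q̃_1)^{−1} − (N_1 + Q̂_1)^{−1} ) + r_2 (Q̂_2 − Q̃_2)( (N_2 + Q̃_1 + Q̃_2)^{−1} − (N_2 + Q̂_1 + Q̂_2)^{−1} ) ] ≥ 0. -/

import Mathlib

open Matrix

variable {n : ℕ}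

private lemma psd_trace_nonneg {M : Matrix (Fin n) (Fin n) ℝ} (hM : M.PosSemidef) :
    0 ≤ M.trace := by
  rw [Matrix.trace]
  refine Finset.sum_nonneg fun i _ => ?_
  have h := hM.dotProduct_mulVec_nonneg (Pi.single i 1)
  simpa [dotProduct, Matrix.mulVec, Matrix.diag, Pi.single_apply, Finset.sum_ite_eq,
    mul_comm] using h

open scoped MatrixOrder in
private lemma trace_quad_nonneg {D P Q : Matrix (Fin n) (Fin n) ℝ} (hD : Dᴴ = D)
    (hP : P.PosSemidef) (hQ : Q.PosSemidef) : 0 ≤ (D * P * D * Q).trace := by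
  obtain ⟨S, hSh, hPS⟩ : ∃ S, Sᴴ = S ∧ S * S = P :=
    ⟨CFC.sqrt P, (CFC.sqrt_nonneg P).posSemidef.isHermitian, CFC.sqrt_mul_sqrt_self P hP.nonneg⟩
  obtain ⟨T, hTh, hQS⟩ : ∃ T, Tᴴ = T ∧ T * T = Q :=
    ⟨CFC.sqrt Q, (CFC.sqrt_nonneg Q).posSemidef.isHermitian, CFC.sqrt_mul_sqrt_self Q hQ.nonneg⟩
  have key : (D * P * D * Q).trace = ((S * D * T)ᴴ * (S * D * T)).trace := by
    have e : (S * D * T)ᴴ * (S * D * T) = T * (D * (S * S) * D * T) := by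
      rw [conjTranspose_mul, conjTranspose_mul, hSh, hTh, hD]; simp only [Matrix.mul_assoc]
    rw [e, Matrix.trace_mul_comm T, ← hPS, ← hQS]
    congr 1
    simp only [Matrix.mul_assoc]
  rw [key]
  exact psd_trace_nonneg (posSemidef_conjTranspose_mul_self _)

private lemma trace_quad_swap {X Y P Q : Matrix (Fin n) (Fin n) ℝ} (hX : Xᴴ = X)
    (hY : Yᴴ = Y) (hP : Pᴴ = P) (hQ : Qᴴ = Q) :
    (X * P * Y * Q).trace = (Y * P * X * Q).trace := by
  have h : (X * P * Y * Q).trace = ((X * P * Y * Q)ᴴ).trace := by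
    rw [Matrix.trace_conjTranspose, star_trivial]
  rw [h, conjTranspose_mul, conjTranspose_mul, conjTranspose_mul, hX, hY, hP, hQ]
  rw [Matrix.trace_mul_comm]
  congr 1
  simp only [Matrix.mul_assoc]

private lemma inv_sub_inv_eq {A B : Matrix (Fin n) (Fin n) ℝ} (hA : A.PosDef) (hB : B.PosDef) :
    A⁻¹ - B⁻¹ = A⁻¹ * (B - A) * B⁻¹ := by
  have h1 : A⁻¹ * A = 1 := Matrix.nonsing_inv_mul _ hA.det_pos.ne'.isUnit
  have h2 : B * B⁻¹ = 1 := Matrix.mul_nonsing_inv _ hB.det_pos.ne'.isUnit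
  rw [Matrix.mul_sub, Matrix.sub_mul, Matrix.mul_assoc, h2, h1, Matrix.mul_one, Matrix.one_mul]

private lemma inv_sub_inv_psd {A C : Matrix (Fin n) (Fin n) ℝ} (hA : A.PosDef) (hC : C.PosDef)
    (hCA : (C - A).PosSemidef) : (A⁻¹ - C⁻¹).PosSemidef := by
  have hAd := hA.det_pos.ne'.isUnit
  have hCd := hC.det_pos.ne'.isUnit
  have h1 : A * A⁻¹ = 1 := Matrix.mul_nonsing_inv _ hAd
  have h3 : C * C⁻¹ = 1 := Matrix.mul_nonsing_inv _ hCd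
  have h5 : ∀ X : Matrix (Fin n) (Fin n) ℝ, A⁻¹ * (A * X) = X := fun X => by
    rw [← Matrix.mul_assoc, Matrix.nonsing_inv_mul _ hAd, Matrix.one_mul]
  have h6 : ∀ X : Matrix (Fin n) (Fin n) ℝ, C⁻¹ * (C * X) = X := fun X => by
    rw [← Matrix.mul_assoc, Matrix.nonsing_inv_mul _ hCd, Matrix.one_mul]
  have hW : (A⁻¹ - C⁻¹)ᴴ = A⁻¹ - C⁻¹ := (hA.inv.isHermitian.sub hC.inv.isHermitian)
  have key : A⁻¹ - C⁻¹ =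
      (A⁻¹ - C⁻¹) * A * (A⁻¹ - C⁻¹)ᴴ + C⁻¹ * (C - A) * (C⁻¹)ᴴ := by
    rw [hW, hC.inv.isHermitian]
    simp only [Matrix.sub_mul, Matrix.mul_sub, Matrix.mul_assoc, h1, h3, h5, h6,
      Matrix.mul_one]
    abel
  rw [key]
  exact (hA.posSemidef.mul_mul_conjTranspose_same _).add (hCA.mul_mul_conjTranspose_same _)

/-- DSC quantity of the 2-user ADBC game is nonnegative for weights
`r₁ ≥ r₂/4 > 0`. -/
theorem adbc_two_user_dsc_nonneg (n : ℕ)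
    (N1 N2 Qt1 Qt2 Qh1 Qh2 : Matrix (Fin n) (Fin n) ℝ)
    (hN2symm : N2.IsSymm)
    (hN1 : N1.PosDef) (hdeg : (N2 - N1).PosSemidef)
    (hQt1 : Qt1.PosSemidef) (hQt2 : Qt2.PosSemidef)
    (hQh1 : Qh1.PosSemidef) (hQh2 : Qh2.PosSemidef)
    (r1 r2 : ℝ) (hr1 : r2 / 4 ≤ r1) (hr2 : 0 < r2 / 4) :
    0 ≤ Matrix.trace
      (r1 • ((Qh1 - Qt1) * ((N1 + Qt1)⁻¹ - (N1 + Qh1)⁻¹)) +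
       r2 • ((Qh2 - Qt2) * ((N2 + Qt1 + Qt2)⁻¹ - (N2 + Qh1 + Qh2)⁻¹))) := by
  set A := N1 + Qt1 with hAdef
  set B := N1 + Qh1 with hBdef
  set C := N2 + Qt1 + Qt2 with hCdef
  set E := N2 + Qh1 + Qh2 with hEdef
  set D := Qh1 - Qt1 with hDdef
  set F := Qh2 - Qt2 + D with hFdef
  have hA : A.PosDef := hN1.add_posSemidef hQt1
  have hB : B.PosDef := hN1.add_posSemidef hQh1
  have hN2 : N2.PosDef := by
    have h := hN1.add_posSemidef hdeg
    have e : N1 + (N2 - N1) = N2 := by abel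
    rwa [e] at h
  have hC : C.PosDef := by
    have h := hN2.add_posSemidef (hQt1.add hQt2)
    have e : N2 + (Qt1 + Qt2) = C := by rw [hCdef]; abel
    rwa [e] at h
  have hE : E.PosDef := by
    have h := hN2.add_posSemidef (hQh1.add hQh2)
    have e : N2 + (Qh1 + Qh2) = E := by rw [hEdef]; abel
    rwa [e] at h
  have hCA : (C - A).PosSemidef := by
    have h := hdeg.add hQt2
    have e : N2 - N1 + Qt2 = C - A := by rw [hCdef, hAdef]; abel
    rwa [e] at h
  have hEB : (E - B).PosSemidef := by
    have h := hdeg.add hQh2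
    have e : N2 - N1 + Qh2 = E - B := by rw [hEdef, hBdef]; abel
    rwa [e] at h
  have hDh : Dᴴ = D := hQh1.isHermitian.sub hQt1.isHermitian
  have hFh : Fᴴ = F := (hQh2.isHermitian.sub hQt2.isHermitian).add
    (hQh1.isHermitian.sub hQt1.isHermitian)
  have hAC : (A⁻¹ - C⁻¹).PosSemidef := inv_sub_inv_psd hA hC hCA
  have hBE : (B⁻¹ - E⁻¹).PosSemidef := inv_sub_inv_psd hB hE hEB
  have hAi : (A⁻¹).PosSemidef := hA.inv.posSemidef
  have hBi : (B⁻¹).PosSemidef := hB.inv.posSemidef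
  have hCi : (C⁻¹).PosSemidef := hC.inv.posSemidef
  have hEi : (E⁻¹).PosSemidef := hE.inv.posSemidef
  have hF2 : Qh2 - Qt2 = F - D := by rw [hFdef]; abel
  have eAB : A⁻¹ - B⁻¹ = A⁻¹ * D * B⁻¹ := by
    rw [inv_sub_inv_eq hA hB, show B - A = D by rw [hBdef, hAdef, hDdef]; abel]
  have eCE : C⁻¹ - E⁻¹ = C⁻¹ * F * E⁻¹ := by
    rw [inv_sub_inv_eq hC hE, show E - C = F by rw [hEdef, hCdef, hFdef, hDdef]; abel]
  rw [hF2, eAB, eCE, Matrix.trace_add, Matrix.trace_smul, Matrix.trace_smul,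
    smul_eq_mul, smul_eq_mul]
  have t1 : (D * (A⁻¹ * D * B⁻¹)).trace = (D * A⁻¹ * D * B⁻¹).trace := by
    congr 1; simp only [Matrix.mul_assoc]
  have t2 : ((F - D) * (C⁻¹ * F * E⁻¹)).trace
      = (F * C⁻¹ * F * E⁻¹).trace - (D * C⁻¹ * F * E⁻¹).trace := by
    rw [← Matrix.trace_sub]
    congr 1
    simp only [Matrix.sub_mul, Matrix.mul_assoc]
  rw [t1, t2]
  have h1 : 0 ≤ (D * A⁻¹ * D * B⁻¹).trace - (D * C⁻¹ * D * B⁻¹).trace := by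
    have e : D * A⁻¹ * D * B⁻¹ - D * C⁻¹ * D * B⁻¹ = D * (A⁻¹ - C⁻¹) * D * B⁻¹ := by
      simp only [Matrix.mul_sub, Matrix.sub_mul]
    rw [← Matrix.trace_sub, e]
    exact trace_quad_nonneg hDh hAC hBi
  have h2 : 0 ≤ (D * C⁻¹ * D * B⁻¹).trace - (D * C⁻¹ * D * E⁻¹).trace := by
    have e : D * C⁻¹ * D * B⁻¹ - D * C⁻¹ * D * E⁻¹ = D * C⁻¹ * D * (B⁻¹ - E⁻¹) := by
      simp only [Matrix.mul_sub]
    rw [← Matrix.trace_sub, e]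
    exact trace_quad_nonneg hDh hCi hBE
  have h3 : 0 ≤ (D * A⁻¹ * D * B⁻¹).trace := trace_quad_nonneg hDh hAi hBi
  have h4 : 0 ≤ (D * C⁻¹ * D * E⁻¹).trace := trace_quad_nonneg hDh hCi hEi
  have hswap : (D * C⁻¹ * F * E⁻¹).trace = (F * C⁻¹ * D * E⁻¹).trace :=
    trace_quad_swap hDh hFh hC.inv.isHermitian hE.inv.isHermitian
  have hSh : (F - (2⁻¹ : ℝ) • D)ᴴ = F - (2⁻¹ : ℝ) • D := by
    rw [conjTranspose_sub, conjTranspose_smul, hDh, hFh, star_trivial]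
  have h5 : 0 ≤ ((F - (2⁻¹ : ℝ) • D) * C⁻¹ * (F - (2⁻¹ : ℝ) • D) * E⁻¹).trace :=
    trace_quad_nonneg hSh hCi hEi
  have h6 : ((F - (2⁻¹ : ℝ) • D) * C⁻¹ * (F - (2⁻¹ : ℝ) • D) * E⁻¹).trace
      = (F * C⁻¹ * F * E⁻¹).trace - 2⁻¹ * (F * C⁻¹ * D * E⁻¹).trace
        - 2⁻¹ * (D * C⁻¹ * F * E⁻¹).trace
        + (2⁻¹ * 2⁻¹) * (D * C⁻¹ * D * E⁻¹).trace := by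
    simp only [Matrix.sub_mul, Matrix.mul_sub, smul_mul_assoc, mul_smul_comm,
      Matrix.trace_sub, Matrix.trace_smul, smul_eq_mul, smul_smul]
    ring
  rw [h6, hswap] at h5
  have k1 : 0 ≤ (r1 - r2 / 4) * (D * A⁻¹ * D * B⁻¹).trace :=
    mul_nonneg (by linarith) h3
  have k2 : 0 ≤ (r2 / 4) * ((D * A⁻¹ * D * B⁻¹).trace - (D * C⁻¹ * D * E⁻¹).trace) :=
    mul_nonneg (by linarith) (by linarith)
  have k3 : 0 ≤ r2 * ((F * C⁻¹ * F * E⁻¹).trace - (D * C⁻¹ * F * E⁻¹).trace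
      + (D * C⁻¹ * D * E⁻¹).trace / 4) := by
    apply mul_nonneg (by linarith)
    rw [hswap]
    linarith
  nlinarith [k1, k2, k3]
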